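/- Define q : ℍ → ℝ by q(w) = (4·Im(w)/(π·|w|⁴)) · (Im(w) + Re(w)·(π/2 − arg(w))), where arg denotes the principal argument (taking values in (0, π) on ℍ). Then for every w ∈ ℍ, writing r = |w| and θ = arg(w) ∈ (0, π), one has 0 < q(w) ≤ (4/π) · θ(π − θ) / r². -/

import Mathlib

open Real

/-- The density `q(ℍ; 0, ∞; ·)` of Lemma 4.2:
`q(w) = (4 Im w/(π|w|⁴)) (Im w + Re w (π/2 − arg w))`. -/
noncomputable def qDensity (w : ℂ) : ℝ :=
  4 * w.im / (π * ‖w‖ ^ 4) * (w.im + w.re * (π / 2 - Complex.arg w))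

private lemma qKey (θ : ℝ) (h0 : 0 < θ) (hπ : θ < π) :
    0 < Real.sin θ + (π / 2 - θ) * Real.cos θ ∧
      Real.sin θ * (Real.sin θ + (π / 2 - θ) * Real.cos θ) ≤ θ * (π - θ) := by
  have hsin : 0 < Real.sin θ := Real.sin_pos_of_pos_of_lt_pi h0 hπ
  have hsinθ : Real.sin θ ≤ θ := Real.sin_le h0.le
  have hsinπθ : Real.sin θ ≤ π - θ := by
    have := Real.sin_le (by linarith : (0:ℝ) ≤ π - θ)
    rwa [Real.sin_pi_sub] at this
  have hfpos : 0 < Real.sin θ + (π / 2 - θ) * Real.cos θ := by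
    rcases le_or_gt θ (π / 2) with h | h
    · have hc : 0 ≤ Real.cos θ := Real.cos_nonneg_of_mem_Icc ⟨by linarith, h⟩
      nlinarith
    · have hc : Real.cos θ ≤ 0 := Real.cos_nonpos_of_pi_div_two_le_of_le h.le (by linarith)
      nlinarith
  refine ⟨hfpos, ?_⟩
  rcases le_or_gt θ (π / 2) with h | h
  · have hc : Real.cos θ ≤ 1 := Real.cos_le_one θ
    have hc0 : 0 ≤ Real.cos θ := Real.cos_nonneg_of_mem_Icc ⟨by linarith, h⟩
    have hf : Real.sin θ + (π / 2 - θ) * Real.cos θ ≤ π / 2 := by nlinarith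
    calc Real.sin θ * (Real.sin θ + (π / 2 - θ) * Real.cos θ) ≤ θ * (π / 2) :=
          mul_le_mul hsinθ hf hfpos.le h0.le
      _ ≤ θ * (π - θ) := by nlinarith
  · have hc : -1 ≤ Real.cos θ := Real.neg_one_le_cos θ
    have hc0 : Real.cos θ ≤ 0 := Real.cos_nonpos_of_pi_div_two_le_of_le h.le (by linarith)
    have hf : Real.sin θ + (π / 2 - θ) * Real.cos θ ≤ π / 2 := by nlinarith
    calc Real.sin θ * (Real.sin θ + (π / 2 - θ) * Real.cos θ) ≤ (π - θ) * (π / 2) :=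
          mul_le_mul hsinπθ hf hfpos.le (by linarith)
      _ ≤ θ * (π - θ) := by nlinarith

/-- Estimate (4.26) used in the proof of Lemma 4.6: for `w ∈ ℍ` with `r = |w|` and
`θ = arg w ∈ (0, π)`, one has `0 < q(w) ≤ (4/π) θ(π − θ)/r²`. -/
theorem qDensity_pos_and_le (w : ℂ) (hw : 0 < w.im) :
    0 < qDensity w ∧
      qDensity w ≤ 4 / π * (Complex.arg w * (π - Complex.arg w)) / ‖w‖ ^ 2 := by
  have hw0 : w ≠ 0 := fun h => by simp [h] at hw
  set r := ‖w‖ with hr_def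
  have hr : 0 < r := norm_pos_iff.mpr hw0
  set θ := Complex.arg w with hθ_def
  have hθ0 : 0 < θ := by
    rw [hθ_def]
    exact lt_of_le_of_ne (Complex.arg_nonneg_iff.2 hw.le)
      (fun h => by
        have := Complex.arg_eq_zero_iff.1 h.symm
        exact absurd this.2 hw.ne')
  have hθπ : θ < π := Complex.arg_lt_pi_iff.2 (Or.inr hw.ne')
  have hre : w.re = r * Real.cos θ := (Complex.norm_mul_cos_arg w).symm
  have him : w.im = r * Real.sin θ := (Complex.norm_mul_sin_arg w).symm
  obtain ⟨hfpos, hkey⟩ := qKey θ hθ0 hθπ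
  have hπ0 : 0 < π := Real.pi_pos
  have hsin : 0 < Real.sin θ := Real.sin_pos_of_pos_of_lt_pi hθ0 hθπ
  have hq : qDensity w = 4 * Real.sin θ * (Real.sin θ + (π / 2 - θ) * Real.cos θ) / (π * r ^ 2) := by
    rw [qDensity, hre, him, ← hr_def, ← hθ_def]
    field_simp
  constructor
  · rw [hq]
    positivity
  · rw [hq, show 4 / π * (θ * (π - θ)) / r ^ 2 = 4 * (θ * (π - θ)) / (π * r ^ 2) by
      field_simp]
    exact div_le_div_of_nonneg_right (by nlinarith) (by positivity)
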